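/- Let (H, ⊳) be a right Post-Hopf algebra over a field K of characteristic zero. Then Prim(H) is closed under ⊳ (if x, y are primitive then x ⊳ y is primitive), and (Prim(H), [·,·], ⊳), where [x,y] = x·y − y·x is the commutator bracket, is a right Post-Lie algebra: for all primitive x, y, z, x ⊳ [y,z] = a_⊳(x,y,z) − a_⊳(x,z,y) and [x,y] ⊳ z = [x ⊳ z, y] + [x, y ⊳ z], where a_⊳(x,y,z) = (x ⊳ y) ⊳ z − x ⊳ (y ⊳ z). -/

import Mathlib

open TensorProduct

section ConvAux

variable {K : Type*} [Field K] {H : Type*} [Ring H] [HopfAlgebra K H]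

open Coalgebra

/-- Convolution product on `Hom(H, End H)`. -/
noncomputable def conv (f g : H →ₗ[K] H →ₗ[K] H) : H →ₗ[K] H →ₗ[K] H :=
  (TensorProduct.lift ((LinearMap.llcomp K H H H).compl₁₂ f g)) ∘ₗ Coalgebra.comul

/-- Convolution unit. -/
noncomputable def eta (K H : Type*) [Field K] [Ring H] [HopfAlgebra K H] :
    H →ₗ[K] H →ₗ[K] H :=
  (Coalgebra.counit (R := K)).smulRight LinearMap.id

lemma conv_repr (f g : H →ₗ[K] H →ₗ[K] H) {z : H} {ι : Type*} (rp : Coalgebra.Repr K z ι) :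
    conv f g z = ∑ i ∈ rp.index, (f (rp.left i)) ∘ₗ (g (rp.right i)) := by
  rw [conv, LinearMap.comp_apply, ← rp.eq, map_sum]
  simp [TensorProduct.lift.tmul, LinearMap.llcomp_apply']


lemma sum_comp' {ι : Type*} (s : Finset ι) (F : ι → (H →ₗ[K] H)) (G : H →ₗ[K] H) :
    (∑ j ∈ s, F j) ∘ₗ G = ∑ j ∈ s, (F j) ∘ₗ G := by
  ext y
  simp [LinearMap.sum_apply]

lemma comp_sum' {ι : Type*} (s : Finset ι) (F : ι → (H →ₗ[K] H)) (G : H →ₗ[K] H) :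
    G ∘ₗ (∑ j ∈ s, F j) = ∑ j ∈ s, G ∘ₗ (F j) := by
  ext y
  simp [LinearMap.sum_apply, map_sum]

lemma conv_eta (f : H →ₗ[K] H →ₗ[K] H) : conv f (eta K H) = f := by
  refine LinearMap.ext fun z => ?_
  set rp := ℛ K z with hrp
  have key := congrArg (TensorProduct.rid K H).toLinearMap (Coalgebra.sum_tmul_counit_eq rp)
  simp only [map_sum, TensorProduct.rid_tmul, one_smul, LinearEquiv.coe_coe] at key
  rw [conv_repr f (eta K H) rp]
  calc ∑ i ∈ rp.index, f (rp.left i) ∘ₗ (eta K H) (rp.right i)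
      = ∑ i ∈ rp.index, f (Coalgebra.counit (R := K) (rp.right i) • rp.left i) := by
        refine Finset.sum_congr rfl fun i _ => ?_
        rw [map_smul]
        ext y
        simp [eta]
    _ = f z := by rw [← map_sum, key]

lemma eta_conv (f : H →ₗ[K] H →ₗ[K] H) : conv (eta K H) f = f := by
  refine LinearMap.ext fun z => ?_
  set rp := ℛ K z with hrp
  have key := congrArg (TensorProduct.lid K H).toLinearMap (Coalgebra.sum_counit_tmul_eq rp)
  simp only [map_sum, TensorProduct.lid_tmul, one_smul, LinearEquiv.coe_coe] at key
  rw [conv_repr (eta K H) f rp]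
  calc ∑ i ∈ rp.index, (eta K H) (rp.left i) ∘ₗ f (rp.right i)
      = ∑ i ∈ rp.index, f (Coalgebra.counit (R := K) (rp.left i) • rp.right i) := by
        refine Finset.sum_congr rfl fun i _ => ?_
        rw [map_smul]
        ext y
        simp [eta]
    _ = f z := by rw [← map_sum, key]

lemma conv_assoc (f g h : H →ₗ[K] H →ₗ[K] H) :
    conv (conv f g) h = conv f (conv g h) := by
  refine LinearMap.ext fun z => ?_
  set rp := ℛ K z with hrp
  have key := congrArg
    (TensorProduct.lift ((LinearMap.llcomp K H H H).compl₁₂ f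
      (TensorProduct.lift ((LinearMap.llcomp K H H H).compl₁₂ g h))))
    (Coalgebra.sum_tmul_tmul_eq rp (fun i => ℛ K (rp.left i)) (fun i => ℛ K (rp.right i)))
  simp only [map_sum, TensorProduct.lift.tmul, LinearMap.compl₁₂_apply,
    LinearMap.llcomp_apply'] at key
  rw [conv_repr (conv f g) h rp, conv_repr f (conv g h) rp]
  calc ∑ i ∈ rp.index, (conv f g (rp.left i)) ∘ₗ h (rp.right i)
      = ∑ i ∈ rp.index, ∑ j ∈ (ℛ K (rp.left i)).index,
          f ((ℛ K (rp.left i)).left j) ∘ₗ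
            ((g ((ℛ K (rp.left i)).right j)) ∘ₗ h (rp.right i)) := by
        refine Finset.sum_congr rfl fun i _ => ?_
        rw [conv_repr f g (ℛ K (rp.left i)), sum_comp']
        exact Finset.sum_congr rfl fun j _ => (LinearMap.comp_assoc _ _ _).symm
    _ = ∑ i ∈ rp.index, ∑ j ∈ (ℛ K (rp.right i)).index,
          f (rp.left i) ∘ₗ ((g ((ℛ K (rp.right i)).left j)) ∘ₗ
            h ((ℛ K (rp.right i)).right j)) := key
    _ = ∑ i ∈ rp.index, (f (rp.left i)) ∘ₗ conv g h (rp.right i) := by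
        refine Finset.sum_congr rfl fun i _ => ?_
        rw [conv_repr g h (ℛ K (rp.right i)), comp_sum']

end ConvAux

open TensorProduct

/-- A right Post-Hopf structure on a Hopf algebra `H`: `r x y = x ⊳ y`. -/
structure IsRightPostHopf (K H : Type*) [Field K] [Ring H] [HopfAlgebra K H]
    (r : H →ₗ[K] H →ₗ[K] H) : Prop where
  /-- `⊳` is compatible with the counit. -/
  counit_r : ∀ x y : H,
    Coalgebra.counit (R := K) (r x y)
      = Coalgebra.counit (R := K) x * Coalgebra.counit (R := K) y
  /-- `⊳` is a coalgebra morphism: `Δ(x ⊳ y) = Δ(x) ⊳ Δ(y)` componentwise. -/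
  comul_r : ∀ x y : H,
    Coalgebra.comul (R := K) (r x y)
      = TensorProduct.map₂ r r (Coalgebra.comul x) (Coalgebra.comul y)
  /-- `(x·y) ⊳ z = Σ (x ⊳ z⁽¹⁾)·(y ⊳ z⁽²⁾)`. -/
  mul_r : ∀ x y z : H,
    r (x * y) z
      = TensorProduct.lift ((LinearMap.mul K H).compl₁₂ (r x) (r y)) (Coalgebra.comul z)
  /-- `(x ⊳ y) ⊳ z = x ⊳ (Σ (y ⊳ z⁽¹⁾)·z⁽²⁾)`. -/
  r_r : ∀ x y z : H,
    r (r x y) z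
      = r x (TensorProduct.lift
          ((LinearMap.mul K H).compl₁₂ (r y) LinearMap.id) (Coalgebra.comul z))
  /-- The right multiplication `γ(z)(y) = y ⊳ z` is convolution invertible. -/
  conv_inv : ∃ β : H →ₗ[K] H →ₗ[K] H, ∀ x : H,
    TensorProduct.lift ((LinearMap.llcomp K H H H).compl₁₂ r.flip β) (Coalgebra.comul x)
        = Coalgebra.counit (R := K) x • (LinearMap.id : H →ₗ[K] H)
    ∧ TensorProduct.lift ((LinearMap.llcomp K H H H).compl₁₂ β r.flip) (Coalgebra.comul x)
        = Coalgebra.counit (R := K) x • (LinearMap.id : H →ₗ[K] H)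


/-- `x` is a primitive element: `Δ(x) = x ⊗ 1 + 1 ⊗ x`. -/
def IsPrimitive (K : Type*) {H : Type*} [Field K] [Ring H] [HopfAlgebra K H] (x : H) : Prop :=
  Coalgebra.comul (R := K) x = x ⊗ₜ[K] (1 : H) + (1 : H) ⊗ₜ[K] x


section PostHopfAux

variable {K : Type*} [Field K] {H : Type*} [Ring H] [HopfAlgebra K H]
variable {r : H →ₗ[K] H →ₗ[K] H} (hr : IsRightPostHopf K H r)

open Coalgebra

include hr

lemma r_one_left (z : H) : r 1 z = Coalgebra.counit (R := K) z • 1 := by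
  classical
  set lam : H →ₗ[K] H →ₗ[K] H := (LinearMap.mul K H) ∘ₗ (r 1) with hlamdef
  have hconv : conv lam r.flip = r.flip := by
    refine LinearMap.ext fun z => LinearMap.ext fun y => ?_
    set rp := ℛ K z with hrp
    rw [conv_repr lam r.flip rp]
    have hm := hr.mul_r 1 y z
    rw [one_mul, ← rp.eq, map_sum] at hm
    simp only [TensorProduct.lift.tmul, LinearMap.compl₁₂_apply,
      LinearMap.mul_apply'] at hm
    simp only [LinearMap.sum_apply, LinearMap.coe_comp, Function.comp_apply,
      LinearMap.flip_apply, LinearMap.mul_apply', hlamdef]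
    exact hm.symm
  obtain ⟨β, hβ⟩ := hr.conv_inv
  have hγβ : conv r.flip β = eta K H := by
    refine LinearMap.ext fun x => ?_
    have := (hβ x).1
    rw [conv, LinearMap.comp_apply, this, eta, LinearMap.smulRight_apply]
  have hlam : lam = eta K H := by
    calc lam = conv lam (eta K H) := (conv_eta lam).symm
      _ = conv lam (conv r.flip β) := by rw [hγβ]
      _ = conv (conv lam r.flip) β := (conv_assoc lam r.flip β).symm
      _ = conv r.flip β := by rw [hconv]
      _ = eta K H := hγβ
  have := LinearMap.congr_fun (LinearMap.congr_fun hlam z) 1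
  simpa [hlamdef, eta, LinearMap.mul_apply'] using this

lemma r_one_one : r (1 : H) 1 = 1 := by
  rw [r_one_left hr, Bialgebra.counit_one, one_smul]

lemma r_one_right (x : H) : r x 1 = x := by
  obtain ⟨β, hβ⟩ := hr.conv_inv
  have h1 := (hβ 1).2
  rw [Bialgebra.comul_one, Algebra.TensorProduct.one_def, TensorProduct.lift.tmul,
    Bialgebra.counit_one, one_smul, LinearMap.compl₁₂_apply, LinearMap.llcomp_apply'] at h1
  -- h1 : β 1 ∘ₗ r.flip 1 = LinearMap.id
  have hT : r (r x 1) 1 = r x 1 := by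
    have := hr.r_r x 1 1
    rwa [Bialgebra.comul_one, Algebra.TensorProduct.one_def, TensorProduct.lift.tmul,
      LinearMap.compl₁₂_apply, LinearMap.mul_apply', LinearMap.id_coe, id_eq,
      r_one_one hr, one_mul] at this
  have hx : β 1 (r x 1) = x := by
    have := LinearMap.congr_fun h1 x
    simpa using this
  have hx2 : β 1 (r (r x 1) 1) = r x 1 := by
    have := LinearMap.congr_fun h1 (r x 1)
    simpa using this
  rw [hT] at hx2
  rw [← hx2, hx]

omit hr in
lemma primitive_counit_smul {x : H} (hx : IsPrimitive K x) :
    Coalgebra.counit (R := K) x • (1 : H) = 0 := by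
  have h := Coalgebra.rTensor_counit_comul (R := K) x
  rw [hx, map_add, LinearMap.rTensor_tmul, LinearMap.rTensor_tmul,
    Bialgebra.counit_one] at h
  have h2 : Coalgebra.counit (R := K) x ⊗ₜ[K] (1 : H) = 0 := by
    have := congrArg (fun t => t - (1 : K) ⊗ₜ[K] x) h
    simpa using this
  have := congrArg (TensorProduct.lid K H).toLinearMap h2
  simpa using this

lemma r_one_left_primitive {y : H} (hy : IsPrimitive K y) : r 1 y = 0 := by
  rw [r_one_left hr, primitive_counit_smul hy]

lemma lift_mul_id_primitive (b : H) {c : H} (hc : IsPrimitive K c) :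
    TensorProduct.lift ((LinearMap.mul K H).compl₁₂ (r b) LinearMap.id)
      (Coalgebra.comul c) = r b c + b * c := by
  rw [hc, map_add, TensorProduct.lift.tmul, TensorProduct.lift.tmul]
  simp [LinearMap.mul_apply', r_one_right hr]

end PostHopfAux

/-- Primitives of a right Post-Hopf algebra are closed under `⊳` and form
a right Post-Lie algebra for the commutator bracket. -/
theorem statement2 {K : Type*} [Field K] [CharZero K]
    {H : Type*} [Ring H] [HopfAlgebra K H]
    (r : H →ₗ[K] H →ₗ[K] H) (hr : IsRightPostHopf K H r) :
    (∀ x y : H, IsPrimitive K x → IsPrimitive K y → IsPrimitive K (r x y))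
    ∧ (∀ x y z : H, IsPrimitive K x → IsPrimitive K y → IsPrimitive K z →
        r x (y * z - z * y)
          = ((r (r x y) z - r x (r y z)) - (r (r x z) y - r x (r z y))))
    ∧ (∀ x y z : H, IsPrimitive K x → IsPrimitive K y → IsPrimitive K z →
        r (x * y - y * x) z
          = ((r x z) * y - y * (r x z)) + (x * (r y z) - (r y z) * x)) := by
  refine ⟨?_, ?_, ?_⟩
  · intro x y hx hy
    unfold IsPrimitive
    rw [hr.comul_r, hx, hy]
    simp only [map_add, LinearMap.add_apply, TensorProduct.map₂_apply_tmul,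
      TensorProduct.map_tmul, r_one_one hr, r_one_right hr,
      r_one_left_primitive hr hy, r_one_left_primitive hr hx,
      TensorProduct.tmul_zero, TensorProduct.zero_tmul]
    abel
  · intro x y z hx hy hz
    have h1 : r x (y * z) = r (r x y) z - r x (r y z) := by
      have := hr.r_r x y z
      rw [lift_mul_id_primitive hr y hz, map_add] at this
      rw [this]; abel
    have h2 : r x (z * y) = r (r x z) y - r x (r z y) := by
      have := hr.r_r x z y
      rw [lift_mul_id_primitive hr z hy, map_add] at this
      rw [this]; abel
    rw [map_sub, h1, h2]
  · intro x y z hx hy hz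
    have h1 : r (x * y) z = (r x z) * y + x * (r y z) := by
      rw [hr.mul_r x y z, hz, map_add, TensorProduct.lift.tmul, TensorProduct.lift.tmul]
      simp [LinearMap.mul_apply', r_one_right hr]
    have h2 : r (y * x) z = (r y z) * x + y * (r x z) := by
      rw [hr.mul_r y x z, hz, map_add, TensorProduct.lift.tmul, TensorProduct.lift.tmul]
      simp [LinearMap.mul_apply', r_one_right hr]
    rw [map_sub, LinearMap.sub_apply, h1, h2]
    abel
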